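/- Let F(v) = exp(-(v-v₀)²/2) + exp(-(v+v₀)²/2). Then ∫_ℝ F'(v)/v dv = ∫_ℝ (F(v) - F(0))/v² dv, and for v₀ sufficiently large this integral is strictly positive. -/

import Mathlib

open MeasureTheory Real

/-- The double-bump profile `F(v) = exp(-(v-v₀)²/2) + exp(-(v+v₀)²/2)`. -/
noncomputable def doubleBump (v₀ v : ℝ) : ℝ :=
  Real.exp (-(v - v₀) ^ 2 / 2) + Real.exp (-(v + v₀) ^ 2 / 2)

/-- Derivative of the double bump. -/
noncomputable def dbDeriv (v₀ v : ℝ) : ℝ :=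
  -((v - v₀) * Real.exp (-(v - v₀) ^ 2 / 2)) - (v + v₀) * Real.exp (-(v + v₀) ^ 2 / 2)

/-- Second derivative of the double bump. -/
noncomputable def dbDeriv2 (v₀ v : ℝ) : ℝ :=
  ((v - v₀) ^ 2 - 1) * Real.exp (-(v - v₀) ^ 2 / 2)
    + ((v + v₀) ^ 2 - 1) * Real.exp (-(v + v₀) ^ 2 / 2)

lemma hasDerivAt_doubleBump (v₀ v : ℝ) : HasDerivAt (doubleBump v₀) (dbDeriv v₀ v) v := by
  have h1 : HasDerivAt (fun x : ℝ => -(x - v₀) ^ 2 / 2) (-(v - v₀)) v := by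
    have h := (((hasDerivAt_id v).sub_const v₀).pow 2).neg.div_const 2
    refine h.congr_deriv ?_
    simp; ring
  have h1' : HasDerivAt (fun x : ℝ => -(x + v₀) ^ 2 / 2) (-(v + v₀)) v := by
    have h := (((hasDerivAt_id v).add_const v₀).pow 2).neg.div_const 2
    refine h.congr_deriv ?_
    simp; ring
  have h := h1.exp.add h1'.exp
  unfold doubleBump dbDeriv
  refine h.congr_deriv ?_
  ring

lemma hasDerivAt_dbDeriv (v₀ v : ℝ) : HasDerivAt (dbDeriv v₀) (dbDeriv2 v₀ v) v := by
  have h1 : HasDerivAt (fun x : ℝ => -(x - v₀) ^ 2 / 2) (-(v - v₀)) v := by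
    have h := (((hasDerivAt_id v).sub_const v₀).pow 2).neg.div_const 2
    refine h.congr_deriv ?_
    simp; ring
  have h1' : HasDerivAt (fun x : ℝ => -(x + v₀) ^ 2 / 2) (-(v + v₀)) v := by
    have h := (((hasDerivAt_id v).add_const v₀).pow 2).neg.div_const 2
    refine h.congr_deriv ?_
    simp; ring
  have h2 : HasDerivAt (fun x : ℝ => (x - v₀) * Real.exp (-(x - v₀) ^ 2 / 2))
      (1 * Real.exp (-(v - v₀) ^ 2 / 2)
        + (v - v₀) * (Real.exp (-(v - v₀) ^ 2 / 2) * -(v - v₀))) v :=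
    ((hasDerivAt_id v).sub_const v₀).mul h1.exp
  have h2' : HasDerivAt (fun x : ℝ => (x + v₀) * Real.exp (-(x + v₀) ^ 2 / 2))
      (1 * Real.exp (-(v + v₀) ^ 2 / 2)
        + (v + v₀) * (Real.exp (-(v + v₀) ^ 2 / 2) * -(v + v₀))) v :=
    ((hasDerivAt_id v).add_const v₀).mul h1'.exp
  have h := h2.neg.sub h2'
  unfold dbDeriv dbDeriv2
  refine h.congr_deriv ?_
  ring

lemma dbDeriv_zero (v₀ : ℝ) : dbDeriv v₀ 0 = 0 := by
  unfold dbDeriv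
  rw [zero_sub, zero_add, neg_sq]
  ring

lemma sq_exp_bound (y : ℝ) : |(y ^ 2 - 1) * Real.exp (-y ^ 2 / 2)| ≤ 2 := by
  have h1 : Real.exp (-y ^ 2 / 2) * Real.exp (y ^ 2 / 2) = 1 := by
    rw [← Real.exp_add]; ring_nf; exact Real.exp_zero
  have h2 := Real.add_one_le_exp (y ^ 2 / 2)
  have h3 := Real.exp_pos (-y ^ 2 / 2)
  have h4 : Real.exp (-y ^ 2 / 2) ≤ 1 := Real.exp_le_one_iff.2 (by nlinarith [sq_nonneg y])
  rw [abs_le]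
  constructor
  · nlinarith [sq_nonneg y]
  · nlinarith [sq_nonneg y]

lemma dbDeriv2_bound (v₀ v : ℝ) : |dbDeriv2 v₀ v| ≤ 4 := by
  unfold dbDeriv2
  calc |_ + _| ≤ |((v - v₀) ^ 2 - 1) * Real.exp (-(v - v₀) ^ 2 / 2)|
        + |((v + v₀) ^ 2 - 1) * Real.exp (-(v + v₀) ^ 2 / 2)| := abs_add_le _ _
    _ ≤ 2 + 2 := add_le_add (sq_exp_bound (v - v₀)) (sq_exp_bound (v + v₀))
    _ = 4 := by norm_num

lemma dbDeriv_bound (v₀ v : ℝ) : |dbDeriv v₀ v| ≤ 4 * |v| := by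
  have h := Convex.norm_image_sub_le_of_norm_hasDerivWithin_le
    (f := dbDeriv v₀) (f' := dbDeriv2 v₀) (s := Set.univ) (C := 4)
    (fun x _ => (hasDerivAt_dbDeriv v₀ x).hasDerivWithinAt)
    (fun x _ => by simpa [Real.norm_eq_abs] using dbDeriv2_bound v₀ x)
    convex_univ (Set.mem_univ 0) (Set.mem_univ v)
  simpa [dbDeriv_zero, Real.norm_eq_abs] using h

lemma doubleBump_sub_bound (v₀ v : ℝ) : |doubleBump v₀ v - doubleBump v₀ 0| ≤ 4 * v ^ 2 := by
  have h := Convex.norm_image_sub_le_of_norm_hasDerivWithin_le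
    (f := doubleBump v₀) (f' := dbDeriv v₀) (s := Set.uIcc 0 v) (C := 4 * |v|)
    (fun x _ => (hasDerivAt_doubleBump v₀ x).hasDerivWithinAt)
    (fun x hx => by
      have h1 := dbDeriv_bound v₀ x
      have h2 : |x| ≤ |v| := by
        rcases Set.mem_uIcc.1 hx with ⟨h3, h4⟩ | ⟨h3, h4⟩ <;>
          exact abs_le.2 ⟨by linarith [neg_abs_le v, abs_nonneg v],
            by linarith [le_abs_self v, abs_nonneg v]⟩
      rw [Real.norm_eq_abs]
      nlinarith)
    (convex_uIcc 0 v) Set.left_mem_uIcc Set.right_mem_uIcc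
  rw [Real.norm_eq_abs, Real.norm_eq_abs, sub_zero] at h
  nlinarith [abs_mul_abs_self v, abs_nonneg v, sq_abs v, h]

lemma doubleBump_pos (v₀ v : ℝ) : 0 < doubleBump v₀ v := by
  unfold doubleBump; positivity

lemma doubleBump_le_two (v₀ v : ℝ) : doubleBump v₀ v ≤ 2 := by
  unfold doubleBump
  have h1 : Real.exp (-(v - v₀) ^ 2 / 2) ≤ 1 :=
    Real.exp_le_one_iff.2 (by nlinarith [sq_nonneg (v - v₀)])
  have h2 : Real.exp (-(v + v₀) ^ 2 / 2) ≤ 1 :=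
    Real.exp_le_one_iff.2 (by nlinarith [sq_nonneg (v + v₀)])
  linarith

lemma doubleBump_sub_le_four (v₀ v : ℝ) : |doubleBump v₀ v - doubleBump v₀ 0| ≤ 4 := by
  have h1 := doubleBump_pos v₀ v
  have h2 := doubleBump_pos v₀ 0
  have h3 := doubleBump_le_two v₀ v
  have h4 := doubleBump_le_two v₀ 0
  rw [abs_le]; constructor <;> linarith

lemma doubleBump_zero_eq (v₀ : ℝ) : doubleBump v₀ 0 = 2 * Real.exp (-v₀ ^ 2 / 2) := by
  unfold doubleBump
  rw [zero_sub, zero_add, neg_sq]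
  ring

lemma continuous_dbDeriv (v₀ : ℝ) : Continuous (dbDeriv v₀) := by
  unfold dbDeriv; fun_prop

lemma continuous_doubleBump (v₀ : ℝ) : Continuous (doubleBump v₀) := by
  unfold doubleBump; fun_prop

lemma xexp_bound (y : ℝ) : y ^ 2 * |y * Real.exp (-y ^ 2 / 2)| ≤ 4 := by
  have h1 : Real.exp (y ^ 2 / 2) = Real.exp (y ^ 2 / 4) * Real.exp (y ^ 2 / 4) := by
    rw [← Real.exp_add, show y ^ 2 / 4 + y ^ 2 / 4 = y ^ 2 / 2 by ring]
  have h2 : 1 + y ^ 2 / 4 ≤ Real.exp (y ^ 2 / 4) := by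
    linarith [Real.add_one_le_exp (y ^ 2 / 4)]
  have h3 : Real.exp (-y ^ 2 / 2) * Real.exp (y ^ 2 / 2) = 1 := by
    rw [← Real.exp_add]; ring_nf; exact Real.exp_zero
  have h4 : |y * Real.exp (-y ^ 2 / 2)| = |y| * Real.exp (-y ^ 2 / 2) := by
    rw [abs_mul, abs_of_pos (Real.exp_pos _)]
  rw [h4]
  have h5 : |y| ^ 3 ≤ 4 * Real.exp (y ^ 2 / 2) := by
    have h6 : (1 + y ^ 2 / 4) * (1 + y ^ 2 / 4) ≤ Real.exp (y ^ 2 / 4) * Real.exp (y ^ 2 / 4) :=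
      mul_self_le_mul_self (by positivity) h2
    rw [h1]
    nlinarith [abs_nonneg y, sq_nonneg (y ^ 2 / 2 - |y|), sq_abs y, h6]
  have hy : y ^ 2 * |y| = |y| ^ 3 := by rw [← sq_abs]; ring
  nlinarith [Real.exp_pos (-y ^ 2 / 2), h5, h3, abs_nonneg y]

lemma integrable_g (v₀ : ℝ) :
    Integrable (fun v : ℝ => (doubleBump v₀ v - doubleBump v₀ 0) / v ^ 2) := by
  refine (integrable_inv_one_add_sq.const_mul 8).mono' ?_ (ae_of_all _ ?_)
  · exact (((continuous_doubleBump v₀).measurable.sub measurable_const).div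
      (measurable_id.pow_const 2)).aestronglyMeasurable
  · intro v
    have h1 : (0:ℝ) < 1 + v ^ 2 := by positivity
    rw [Real.norm_eq_abs, abs_div, abs_of_nonneg (sq_nonneg v), ← div_eq_mul_inv]
    rcases eq_or_ne v 0 with rfl | hv
    · simp
    · have hv2 : (0:ℝ) < v ^ 2 := by positivity
      rw [div_le_div_iff₀ hv2 h1]
      nlinarith [doubleBump_sub_bound v₀ v, doubleBump_sub_le_four v₀ v, sq_nonneg v,
        abs_nonneg (doubleBump v₀ v - doubleBump v₀ 0)]

lemma integrable_f (v₀ : ℝ) (hv₀ : 0 < v₀) :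
    Integrable (fun v : ℝ => dbDeriv v₀ v / v) := by
  refine (integrable_inv_one_add_sq.const_mul (68 + 4 * (2 * v₀ + 2) ^ 2)).mono'
    ?_ (ae_of_all _ ?_)
  · exact ((continuous_dbDeriv v₀).measurable.div measurable_id).aestronglyMeasurable
  · intro v
    have h1 : (0:ℝ) < 1 + v ^ 2 := by positivity
    rw [Real.norm_eq_abs, abs_div, ← div_eq_mul_inv]
    rcases le_or_gt |v| (2 * v₀ + 2) with hv | hv
    · have h2 : |dbDeriv v₀ v| / |v| ≤ 4 := by
        rcases eq_or_ne v 0 with rfl | h0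
        · simp
        · rw [div_le_iff₀ (abs_pos.2 h0)]
          linarith [dbDeriv_bound v₀ v]
      refine h2.trans ?_
      rw [le_div_iff₀ h1]
      have h3 : v ^ 2 ≤ (2 * v₀ + 2) ^ 2 := by
        nlinarith [sq_abs v, abs_nonneg v]
      nlinarith [sq_nonneg (2 * v₀ + 2)]
    · have hv1 : (1:ℝ) ≤ |v| := by linarith
      have hv0 : v ≠ 0 := by
        intro h
        rw [h] at hv
        simp at hv
        linarith
      have hma : |v| / 2 ≤ |v - v₀| := by
        have h := abs_sub_abs_le_abs_sub v v₀
        rw [abs_of_pos hv₀] at h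
        linarith
      have hmb : |v| / 2 ≤ |v + v₀| := by
        have h := abs_sub_abs_le_abs_sub v (-v₀)
        rw [abs_neg, abs_of_pos hv₀, sub_neg_eq_add] at h
        linarith
      have hsa : v ^ 2 ≤ 4 * (v - v₀) ^ 2 := by
        nlinarith [sq_abs (v - v₀), sq_abs v, mul_self_le_mul_self
          (by positivity : (0:ℝ) ≤ |v| / 2) hma]
      have hsb : v ^ 2 ≤ 4 * (v + v₀) ^ 2 := by
        nlinarith [sq_abs (v + v₀), sq_abs v, mul_self_le_mul_self
          (by positivity : (0:ℝ) ≤ |v| / 2) hmb]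
      have ha := xexp_bound (v - v₀)
      have hb := xexp_bound (v + v₀)
      have hA : v ^ 2 * |(v - v₀) * Real.exp (-(v - v₀) ^ 2 / 2)| ≤ 16 := by
        nlinarith [abs_nonneg ((v - v₀) * Real.exp (-(v - v₀) ^ 2 / 2))]
      have hB : v ^ 2 * |(v + v₀) * Real.exp (-(v + v₀) ^ 2 / 2)| ≤ 16 := by
        nlinarith [abs_nonneg ((v + v₀) * Real.exp (-(v + v₀) ^ 2 / 2))]
      have hf : |dbDeriv v₀ v| ≤ |(v - v₀) * Real.exp (-(v - v₀) ^ 2 / 2)|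
          + |(v + v₀) * Real.exp (-(v + v₀) ^ 2 / 2)| := by
        unfold dbDeriv
        rw [show -((v - v₀) * Real.exp (-(v - v₀) ^ 2 / 2))
              - (v + v₀) * Real.exp (-(v + v₀) ^ 2 / 2)
            = -((v - v₀) * Real.exp (-(v - v₀) ^ 2 / 2)
              + (v + v₀) * Real.exp (-(v + v₀) ^ 2 / 2)) by ring, abs_neg]
        exact abs_add_le _ _
      have hfv2 : v ^ 2 * |dbDeriv v₀ v| ≤ 32 := by nlinarith [sq_nonneg v]
      have h2v : (1:ℝ) ≤ v ^ 2 := by nlinarith [sq_abs v]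
      have hfle : |dbDeriv v₀ v| ≤ 32 := by nlinarith [abs_nonneg (dbDeriv v₀ v)]
      have hdiv : |dbDeriv v₀ v| / |v| ≤ |dbDeriv v₀ v| := div_le_self (abs_nonneg _) hv1
      refine hdiv.trans ?_
      rw [le_div_iff₀ h1]
      nlinarith [sq_nonneg (2 * v₀ + 2)]

lemma doubleBump_lower (v₀ v : ℝ) :
    2 * Real.exp (-v₀ ^ 2 / 2) * (1 - v ^ 2 / 2) ≤ doubleBump v₀ v := by
  have e1 : Real.exp (-(v - v₀) ^ 2 / 2)
      = Real.exp (-v₀ ^ 2 / 2) * (Real.exp (-v ^ 2 / 2) * Real.exp (v * v₀)) := by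
    rw [← Real.exp_add, ← Real.exp_add]; congr 1; ring
  have e2 : Real.exp (-(v + v₀) ^ 2 / 2)
      = Real.exp (-v₀ ^ 2 / 2) * (Real.exp (-v ^ 2 / 2) * Real.exp (-(v * v₀))) := by
    rw [← Real.exp_add, ← Real.exp_add]; congr 1; ring
  have hprod : Real.exp (v * v₀) * Real.exp (-(v * v₀)) = 1 := by
    rw [← Real.exp_add]; simp
  have hb : 2 ≤ Real.exp (v * v₀) + Real.exp (-(v * v₀)) := by
    nlinarith [sq_nonneg (Real.exp (v * v₀) - 1), Real.exp_pos (v * v₀),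
      Real.exp_pos (-(v * v₀))]
  have ha : 1 - v ^ 2 / 2 ≤ Real.exp (-v ^ 2 / 2) := by
    linarith [Real.add_one_le_exp (-v ^ 2 / 2)]
  unfold doubleBump
  rw [e1, e2]
  have hc := Real.exp_pos (-v₀ ^ 2 / 2)
  have hav := Real.exp_pos (-v ^ 2 / 2)
  nlinarith [mul_pos hc hav, Real.exp_pos (v * v₀), Real.exp_pos (-(v * v₀))]

set_option maxHeartbeats 2000000 in
/-- For `F(v) = exp(-(v-v₀)²/2) + exp(-(v+v₀)²/2)` one has
`∫ F'(v)/v dv = ∫ (F(v) - F(0))/v² dv`, and for `v₀` sufficiently large this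
integral is strictly positive. -/
theorem doubleBump_integral_identity_and_positive :
    (∀ v₀ : ℝ, 0 < v₀ →
      (∫ v : ℝ, deriv (doubleBump v₀) v / v) =
        ∫ v : ℝ, (doubleBump v₀ v - doubleBump v₀ 0) / v ^ 2) ∧
    ∃ V : ℝ, ∀ v₀ : ℝ, V ≤ v₀ →
      0 < ∫ v : ℝ, (doubleBump v₀ v - doubleBump v₀ 0) / v ^ 2 := by
  constructor
  · -- the integration-by-parts identity
    intro v₀ hv₀
    have hderiv_eq : (fun v : ℝ => deriv (doubleBump v₀) v / v)
        = fun v : ℝ => dbDeriv v₀ v / v :=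
      funext fun v => by rw [(hasDerivAt_doubleBump v₀ v).deriv]
    rw [hderiv_eq]
    have hf := integrable_f v₀ hv₀
    have hg := integrable_g v₀
    set G := fun v : ℝ => (doubleBump v₀ v - doubleBump v₀ 0) / v with hGdef
    have hG0 : G 0 = 0 := by simp [hGdef]
    have hGderiv : ∀ v : ℝ, v ≠ 0 → HasDerivAt G
        (dbDeriv v₀ v / v - (doubleBump v₀ v - doubleBump v₀ 0) / v ^ 2) v := by
      intro v hv
      have h := ((hasDerivAt_doubleBump v₀ v).sub_const (doubleBump v₀ 0)).div
        (hasDerivAt_id v) hv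
      refine h.congr_deriv ?_
      simp only [id]; field_simp
    have hGbd : ∀ v : ℝ, ‖G v‖ ≤ 4 * |v| := by
      intro v
      rcases eq_or_ne v 0 with rfl | hv
      · simp [hG0]
      · simp only [hGdef, Real.norm_eq_abs]
        rw [abs_div, div_le_iff₀ (abs_pos.2 hv)]
        nlinarith [doubleBump_sub_bound v₀ v, abs_mul_abs_self v, abs_nonneg v]
    have hGcont0 : ∀ s : Set ℝ, ContinuousWithinAt G s 0 := by
      intro s
      have h : Filter.Tendsto G (nhdsWithin 0 s) (nhds 0) := by
        apply squeeze_zero_norm hGbd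
        have h2 : Filter.Tendsto (fun v : ℝ => 4 * |v|) (nhds 0) (nhds 0) := by
          have h3 : Filter.Tendsto (fun v : ℝ => 4 * |v|) (nhds 0) (nhds (4 * |0|)) := (continuous_const.mul continuous_abs : Continuous fun v : ℝ => 4 * |v|).tendsto 0
          rw [abs_zero, mul_zero] at h3; exact h3
        exact h2.mono_left nhdsWithin_le_nhds
      simpa [ContinuousWithinAt, hG0] using h
    have hGfar : ∀ v : ℝ, 1 ≤ |v| → ‖G v‖ ≤ 4 * |v|⁻¹ := by
      intro v hv
      have hv0 : v ≠ 0 := by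
        intro h
        rw [h] at hv
        norm_num at hv
      simp only [hGdef, Real.norm_eq_abs]
      rw [abs_div, div_le_iff₀ (abs_pos.2 hv0), mul_assoc,
        inv_mul_cancel₀ (abs_pos.2 hv0).ne', mul_one]
      exact doubleBump_sub_le_four v₀ v
    have hlim : Filter.Tendsto (fun v : ℝ => 4 * |v|⁻¹) Filter.atTop (nhds 0) := by
      have h := (tendsto_inv_atTop_zero.comp Filter.tendsto_abs_atTop_atTop).const_mul (4:ℝ)
      simpa using h
    have hlim' : Filter.Tendsto (fun v : ℝ => 4 * |v|⁻¹) Filter.atBot (nhds 0) := by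
      have h := (tendsto_inv_atTop_zero.comp Filter.tendsto_abs_atBot_atTop).const_mul (4:ℝ)
      simpa using h
    have htop : Filter.Tendsto G Filter.atTop (nhds 0) := by
      apply squeeze_zero_norm' ?_ hlim
      filter_upwards [Filter.eventually_ge_atTop (1:ℝ)] with v hv
      exact hGfar v (by rw [abs_of_pos (by linarith)]; linarith)
    have hbot : Filter.Tendsto G Filter.atBot (nhds 0) := by
      apply squeeze_zero_norm' ?_ hlim'
      filter_upwards [Filter.eventually_le_atBot (-1:ℝ)] with v hv
      exact hGfar v (by rw [abs_of_neg (by linarith)]; linarith)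
    set φ := fun v : ℝ => dbDeriv v₀ v / v - (doubleBump v₀ v - doubleBump v₀ 0) / v ^ 2
      with hφdef
    have hφ : Integrable φ := hf.sub hg
    have hIoi : ∫ v in Set.Ioi (0:ℝ), φ v = 0 - G 0 :=
      integral_Ioi_of_hasDerivAt_of_tendsto (hGcont0 _)
        (fun x hx => hGderiv x (ne_of_gt hx)) hφ.integrableOn htop
    have hIic : ∫ v in Set.Iic (0:ℝ), φ v = G 0 - 0 :=
      integral_Iic_of_hasDerivAt_of_tendsto (hGcont0 _)
        (fun x hx => hGderiv x (ne_of_lt hx)) hφ.integrableOn hbot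
    have htot : ∫ v, φ v = 0 := by
      rw [← intervalIntegral.integral_Iic_add_Ioi hφ.integrableOn hφ.integrableOn, hIoi, hIic, hG0]
      ring
    have hsub := integral_sub hf hg
    have hdiff : (∫ v, dbDeriv v₀ v / v)
        - ∫ v, (doubleBump v₀ v - doubleBump v₀ 0) / v ^ 2 = 0 := by
      rw [← hsub]; exact htot
    linarith
  · -- positivity for large v₀
    refine ⟨16, fun v₀ hv => ?_⟩
    have hv₀ : (0:ℝ) < v₀ := by linarith
    set E := Real.exp (-v₀ ^ 2 / 2) with hEdef
    have hEpos : 0 < E := Real.exp_pos _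
    have hE1 : E * Real.exp (v₀ ^ 2 / 2) = 1 := by
      rw [hEdef, ← Real.exp_add, show -v₀ ^ 2 / 2 + v₀ ^ 2 / 2 = (0:ℝ) by ring]; exact Real.exp_zero
    have hcube : (v₀ ^ 2 / 6) ^ 3 ≤ Real.exp (v₀ ^ 2 / 2) := by
      have h2 : v₀ ^ 2 / 6 ≤ Real.exp (v₀ ^ 2 / 6) := by
        linarith [Real.add_one_le_exp (v₀ ^ 2 / 6)]
      have h3 : (0:ℝ) ≤ v₀ ^ 2 / 6 := by positivity
      calc (v₀ ^ 2 / 6) ^ 3 ≤ Real.exp (v₀ ^ 2 / 6) ^ 3 := pow_le_pow_left₀ h3 h2 3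
        _ = Real.exp (v₀ ^ 2 / 6 + v₀ ^ 2 / 6 + v₀ ^ 2 / 6) := by
            rw [Real.exp_add, Real.exp_add]; ring
        _ = Real.exp (v₀ ^ 2 / 2) := by
            rw [show v₀ ^ 2 / 6 + v₀ ^ 2 / 6 + v₀ ^ 2 / 6 = v₀ ^ 2 / 2 by ring]
    have hE6 : E * v₀ ^ 6 ≤ 216 := by nlinarith [hEpos]
    have hv2 : (256:ℝ) ≤ v₀ ^ 2 := by nlinarith
    have hv4 : (65536:ℝ) ≤ v₀ ^ 4 := by nlinarith [hv2]
    have hv6 : (16777216:ℝ) ≤ v₀ ^ 6 := by nlinarith [hv2, hv4]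
    have hE4 : 4 * E ≤ 1 := by
      nlinarith [mul_le_mul_of_nonneg_left hv6 hEpos.le, hE6]
    set c₁ := Real.exp (-(1:ℝ) / 2) with hc₁def
    have hc1 : (1:ℝ) / 2 < c₁ := by
      have h1 : Real.exp ((1:ℝ) / 2) ^ 2 = Real.exp 1 := by
        rw [sq, ← Real.exp_add]; norm_num
      have h2 := Real.exp_one_lt_d9
      have h3 := Real.exp_pos ((1:ℝ) / 2)
      have h4 : Real.exp ((1:ℝ) / 2) < 2 := by nlinarith
      have h5 : c₁ * Real.exp ((1:ℝ) / 2) = 1 := by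
        rw [hc₁def, ← Real.exp_add]; norm_num
      nlinarith [Real.exp_pos (-(1:ℝ) / 2)]
    set F0 := doubleBump v₀ 0 with hF0def
    have hF0 : F0 = 2 * E := by rw [hF0def, hEdef]; exact doubleBump_zero_eq v₀
    have hF0pos : 0 < F0 := doubleBump_pos v₀ 0
    have hg := integrable_g v₀
    set A : Set ℝ := Set.Icc (-1) 1 with hAdef
    set T : Set ℝ := Set.Icc (v₀ - 1) (v₀ + 1) with hTdef
    have hTA : T ⊆ Aᶜ := by
      intro x hx
      simp only [hTdef, Set.mem_Icc] at hx
      simp only [hAdef, Set.mem_compl_iff, Set.mem_Icc, not_and_or, not_le]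
      right
      linarith
    have hmeasA : MeasurableSet A := measurableSet_Icc
    have hmeasT : MeasurableSet T := measurableSet_Icc
    have hsplit1 : (∫ v, (doubleBump v₀ v - F0) / v ^ 2)
        = (∫ v in A, (doubleBump v₀ v - F0) / v ^ 2)
          + ∫ v in Aᶜ, (doubleBump v₀ v - F0) / v ^ 2 :=
      (integral_add_compl hmeasA hg).symm
    have hsplit2 : (∫ v in Aᶜ, (doubleBump v₀ v - F0) / v ^ 2)
        = (∫ v in T, (doubleBump v₀ v - F0) / v ^ 2)
          + ∫ v in Aᶜ \ T, (doubleBump v₀ v - F0) / v ^ 2 := by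
      rw [← setIntegral_union Set.disjoint_sdiff_right (hmeasA.compl.diff hmeasT)
        hg.integrableOn hg.integrableOn, Set.union_diff_cancel hTA]
    -- bound on A
    have hptA : ∀ x ∈ A, -(F0 / 2) ≤ (doubleBump v₀ x - F0) / x ^ 2 := by
      intro x hx
      simp only [hAdef, Set.mem_Icc] at hx
      rcases eq_or_ne x 0 with rfl | hx0
      · simp only [ne_eq, OfNat.ofNat_ne_zero, not_false_eq_true, zero_pow, div_zero]
        linarith
      · have hx2 : (0:ℝ) < x ^ 2 := by positivity
        rw [le_div_iff₀ hx2, hF0]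
        have hlow := doubleBump_lower v₀ x
        rw [← hEdef] at hlow
        nlinarith [hlow, hEpos]
    have hIA : -F0 ≤ ∫ v in A, (doubleBump v₀ v - F0) / v ^ 2 := by
      have h1 : (∫ _ in A, (-(F0 / 2)) : ℝ) ≤ ∫ v in A, (doubleBump v₀ v - F0) / v ^ 2 :=
        setIntegral_mono_on (integrableOn_const measure_Icc_lt_top.ne)
          hg.integrableOn hmeasA hptA
      rw [setIntegral_const, hAdef, Real.volume_real_Icc,
        show (1:ℝ) - (-1) = 2 by norm_num, max_eq_left (by norm_num : (0:ℝ) ≤ 2),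
        smul_eq_mul] at h1
      linarith
    -- bound on T
    have hnum : 0 ≤ c₁ - F0 := by rw [hF0]; linarith
    have hptT : ∀ x ∈ T, (c₁ - F0) / (v₀ + 1) ^ 2 ≤ (doubleBump v₀ x - F0) / x ^ 2 := by
      intro x hx
      simp only [hTdef, Set.mem_Icc] at hx
      have hx0 : 0 < x := by linarith
      have hexp : c₁ ≤ Real.exp (-(x - v₀) ^ 2 / 2) := by
        rw [hc₁def]
        apply Real.exp_le_exp.2
        nlinarith [hx.1, hx.2]
      have hFx : c₁ ≤ doubleBump v₀ x := by
        unfold doubleBump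
        have h := Real.exp_pos (-(x + v₀) ^ 2 / 2)
        linarith
      have hd1 : 0 ≤ doubleBump v₀ x - F0 := by linarith
      have hd2 : c₁ - F0 ≤ doubleBump v₀ x - F0 := by linarith
      have hd3 : (0:ℝ) < x ^ 2 := pow_pos hx0 2
      have hd4 : x ^ 2 ≤ (v₀ + 1) ^ 2 := by nlinarith [hx.1, hx.2]
      exact div_le_div₀ hd1 hd2 hd3 hd4
    have hIT : 2 * ((c₁ - F0) / (v₀ + 1) ^ 2) ≤ ∫ v in T, (doubleBump v₀ v - F0) / v ^ 2 := by
      have h1 : (∫ _ in T, ((c₁ - F0) / (v₀ + 1) ^ 2) : ℝ)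
          ≤ ∫ v in T, (doubleBump v₀ v - F0) / v ^ 2 :=
        setIntegral_mono_on (integrableOn_const measure_Icc_lt_top.ne)
          hg.integrableOn hmeasT hptT
      rw [setIntegral_const, hTdef, Real.volume_real_Icc,
        show v₀ + 1 - (v₀ - 1) = 2 by ring, max_eq_left (by norm_num : (0:ℝ) ≤ 2),
        smul_eq_mul] at h1
      linarith
    -- bound on the remaining region
    have hq : Integrable (fun v : ℝ => 2 * F0 * (1 + v ^ 2)⁻¹) :=
      integrable_inv_one_add_sq.const_mul (2 * F0)
    have hptS : ∀ x ∈ Aᶜ \ T, -(2 * F0 * (1 + x ^ 2)⁻¹) ≤ (doubleBump v₀ x - F0) / x ^ 2 := by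
      intro x hx
      have hxA : x ∈ Aᶜ := hx.1
      simp only [hAdef, Set.mem_compl_iff, Set.mem_Icc, not_and_or, not_le] at hxA
      have hx2 : (1:ℝ) ≤ x ^ 2 := by rcases hxA with h | h <;> nlinarith
      have hx2p : (0:ℝ) < x ^ 2 := by linarith
      have h1x : (0:ℝ) < 1 + x ^ 2 := by positivity
      have hinv : (1 + x ^ 2)⁻¹ * (1 + x ^ 2) = 1 := inv_mul_cancel₀ h1x.ne'
      rw [le_div_iff₀ hx2p]
      have hFx := doubleBump_pos v₀ x
      have hIp : (0:ℝ) < (1 + x ^ 2)⁻¹ := by positivity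
      nlinarith [hF0pos, hFx, hinv, hIp,
        mul_nonneg (by linarith : (0:ℝ) ≤ x ^ 2 - 1) hIp.le]
    have hIS : -(8 * F0) ≤ ∫ v in Aᶜ \ T, (doubleBump v₀ v - F0) / v ^ 2 := by
      have h1 : (∫ x in Aᶜ \ T, -(2 * F0 * (1 + x ^ 2)⁻¹))
          ≤ ∫ v in Aᶜ \ T, (doubleBump v₀ v - F0) / v ^ 2 :=
        setIntegral_mono_on hq.neg.integrableOn hg.integrableOn
          (hmeasA.compl.diff hmeasT) hptS
      have h2 : (∫ x in Aᶜ \ T, -(2 * F0 * (1 + x ^ 2)⁻¹))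
          = -∫ x in Aᶜ \ T, 2 * F0 * (1 + x ^ 2)⁻¹ := integral_neg _
      have h3 : (∫ x in Aᶜ \ T, 2 * F0 * (1 + x ^ 2)⁻¹)
          ≤ ∫ x : ℝ, 2 * F0 * (1 + x ^ 2)⁻¹ :=
        setIntegral_le_integral hq (ae_of_all _ fun x => by positivity)
      have h4 : (∫ x : ℝ, 2 * F0 * (1 + x ^ 2)⁻¹) = 2 * F0 * π := by
        rw [MeasureTheory.integral_const_mul, integral_univ_inv_one_add_sq]
      have h5 : 2 * F0 * π ≤ 8 * F0 := by nlinarith [Real.pi_le_four, hF0pos]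
      linarith
    -- final numeric computation
    have hkey : 9 * F0 < 2 * ((c₁ - F0) / (v₀ + 1) ^ 2) := by
      have hvp : (0:ℝ) < (v₀ + 1) ^ 2 := by positivity
      rw [show 2 * ((c₁ - F0) / (v₀ + 1) ^ 2) = 2 * (c₁ - F0) / (v₀ + 1) ^ 2 by ring,
        lt_div_iff₀ hvp, hF0]
      have hstep : 216 * (18 * (v₀ + 1) ^ 2 + 4) ≤ v₀ ^ 6 := by
        have h16v : 16 * v₀ ≤ v₀ ^ 2 := by nlinarith
        nlinarith [hv2, hv4, hv, mul_le_mul_of_nonneg_right hv4 (sq_nonneg v₀)]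
      have hEstep : E * (216 * (18 * (v₀ + 1) ^ 2 + 4)) ≤ E * v₀ ^ 6 :=
        mul_le_mul_of_nonneg_left hstep hEpos.le
      nlinarith [hEstep, hE6, hc1, hEpos]
    rw [hsplit1, hsplit2]
    linarith
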